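/- Let q ∈ ℂ with q ≠ 0 and q² ≠ 1, and let α, β, γ, δ, ε, ζ ∈ ℂ. Then, pointwise on every f : ℂ → ℂ at every z ∈ ℂ with z ≠ 0 and q^{2k}z² ≠ 1 for k ∈ {−1,0,1}: (αY + βU + γV)(δY + εU + ζV)f(z) = βε·(U²f)(z) + γζ·(V²f)(z) + (αδ − βζq⁻¹ − γεq)·(Y²f)(z) + (αεq + βδ)·(U(Yf))(z) + (αζq⁻¹ + γδ)·(V(Yf))(z) + (βζ + γε)·f(z). In particular the most general quadratic expression in Y, U, V reduces to this form. -/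

import Mathlib

noncomputable def Yop (q : ℂ) (f : ℂ → ℂ) (z : ℂ) : ℂ :=
  (f (q * z) - f (q⁻¹ * z)) / (z - z⁻¹)

noncomputable def Uop (q : ℂ) (f : ℂ → ℂ) (z : ℂ) : ℂ :=
  (z * f (q * z) - z⁻¹ * f (q⁻¹ * z)) / (z - z⁻¹)

noncomputable def Vop (q : ℂ) (f : ℂ → ℂ) (z : ℂ) : ℂ :=
  (z * f (q⁻¹ * z) - z⁻¹ * f (q * z)) / (z - z⁻¹)

/-- `M^(α,β,γ) = αY + βU + γV` -/
noncomputable def Mop (q α β γ : ℂ) (f : ℂ → ℂ) : ℂ → ℂ :=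
  fun z => α * Yop q f z + β * Uop q f z + γ * Vop q f z

section aux

variable (q z : ℂ) (f : ℂ → ℂ)

lemma Yop_qz (hq : q ≠ 0) (hz : z ≠ 0) (h1 : q ^ 2 * z ^ 2 - 1 ≠ 0) :
    Yop q f (q * z) = q * z * (f (q ^ 2 * z) - f z) / (q ^ 2 * z ^ 2 - 1) := by
  have e1 : q * (q * z) = q ^ 2 * z := by ring
  have e2 : q⁻¹ * (q * z) = z := by field_simp
  rw [Yop, e1, e2]
  rw [div_eq_div_iff _ h1]
  · field_simp
  · intro h; apply h1; field_simp at h; linear_combination h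

lemma Yop_qiz (hq : q ≠ 0) (hz : z ≠ 0) (h2 : z ^ 2 - q ^ 2 ≠ 0) :
    Yop q f (q⁻¹ * z) = q * z * (f z - f (q⁻¹ ^ 2 * z)) / (z ^ 2 - q ^ 2) := by
  have e3 : q * (q⁻¹ * z) = z := by field_simp
  have e4 : q⁻¹ * (q⁻¹ * z) = q⁻¹ ^ 2 * z := by ring
  rw [Yop, e3, e4]
  rw [div_eq_div_iff _ h2]
  · field_simp
  · intro h; apply h2; field_simp at h; linear_combination h

lemma Uop_qz (hq : q ≠ 0) (hz : z ≠ 0) (h1 : q ^ 2 * z ^ 2 - 1 ≠ 0) :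
    Uop q f (q * z) = (q ^ 2 * z ^ 2 * f (q ^ 2 * z) - f z) / (q ^ 2 * z ^ 2 - 1) := by
  have e1 : q * (q * z) = q ^ 2 * z := by ring
  have e2 : q⁻¹ * (q * z) = z := by field_simp
  rw [Uop, e1, e2]
  rw [div_eq_div_iff _ h1]
  · field_simp
  · intro h; apply h1; field_simp at h; linear_combination h

lemma Uop_qiz (hq : q ≠ 0) (hz : z ≠ 0) (h2 : z ^ 2 - q ^ 2 ≠ 0) :
    Uop q f (q⁻¹ * z) = (z ^ 2 * f z - q ^ 2 * f (q⁻¹ ^ 2 * z)) / (z ^ 2 - q ^ 2) := by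
  have e3 : q * (q⁻¹ * z) = z := by field_simp
  have e4 : q⁻¹ * (q⁻¹ * z) = q⁻¹ ^ 2 * z := by ring
  rw [Uop, e3, e4]
  rw [div_eq_div_iff _ h2]
  · field_simp
  · intro h; apply h2; field_simp at h; linear_combination h

lemma Vop_qz (hq : q ≠ 0) (hz : z ≠ 0) (h1 : q ^ 2 * z ^ 2 - 1 ≠ 0) :
    Vop q f (q * z) = (q ^ 2 * z ^ 2 * f z - f (q ^ 2 * z)) / (q ^ 2 * z ^ 2 - 1) := by
  have e1 : q * (q * z) = q ^ 2 * z := by ring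
  have e2 : q⁻¹ * (q * z) = z := by field_simp
  rw [Vop, e1, e2]
  rw [div_eq_div_iff _ h1]
  · field_simp
  · intro h; apply h1; field_simp at h; linear_combination h

lemma Vop_qiz (hq : q ≠ 0) (hz : z ≠ 0) (h2 : z ^ 2 - q ^ 2 ≠ 0) :
    Vop q f (q⁻¹ * z) = (z ^ 2 * f (q⁻¹ ^ 2 * z) - q ^ 2 * f z) / (z ^ 2 - q ^ 2) := by
  have e3 : q * (q⁻¹ * z) = z := by field_simp
  have e4 : q⁻¹ * (q⁻¹ * z) = q⁻¹ ^ 2 * z := by ring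
  rw [Vop, e3, e4]
  rw [div_eq_div_iff _ h2]
  · field_simp
  · intro h; apply h2; field_simp at h; linear_combination h

lemma Yop_eval (hz : z ≠ 0) (n0 : z ^ 2 - 1 ≠ 0) (g : ℂ → ℂ) :
    Yop q g z = z * (g (q * z) - g (q⁻¹ * z)) / (z ^ 2 - 1) := by
  rw [Yop, div_eq_div_iff _ n0]
  · field_simp
  · intro h; apply n0; field_simp at h; linear_combination h

lemma Uop_eval (hz : z ≠ 0) (n0 : z ^ 2 - 1 ≠ 0) (g : ℂ → ℂ) :
    Uop q g z = (z ^ 2 * g (q * z) - g (q⁻¹ * z)) / (z ^ 2 - 1) := by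
  rw [Uop, div_eq_div_iff _ n0]
  · field_simp
  · intro h; apply n0; field_simp at h; linear_combination h

lemma Vop_eval (hz : z ≠ 0) (n0 : z ^ 2 - 1 ≠ 0) (g : ℂ → ℂ) :
    Vop q g z = (z ^ 2 * g (q⁻¹ * z) - g (q * z)) / (z ^ 2 - 1) := by
  rw [Vop, div_eq_div_iff _ n0]
  · field_simp
  · intro h; apply n0; field_simp at h; linear_combination h

end aux

set_option maxHeartbeats 4000000 in
/-- reduction of the general quadratic expression
`(αY + βU + γV)(δY + εU + ζV)` to the canonical form. -/
theorem quadratic_reduction (q : ℂ) (hq : q ≠ 0) (hq2 : q ^ 2 ≠ 1)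
    (α β γ δ ε ζ : ℂ) (f : ℂ → ℂ) (z : ℂ) (hz : z ≠ 0)
    (h0 : z ^ 2 ≠ 1) (h1 : q ^ 2 * z ^ 2 ≠ 1) (hm1 : q⁻¹ ^ 2 * z ^ 2 ≠ 1) :
    Mop q α β γ (Mop q δ ε ζ f) z
      = β * ε * Uop q (Uop q f) z + γ * ζ * Vop q (Vop q f) z
        + (α * δ - β * ζ * q⁻¹ - γ * ε * q) * Yop q (Yop q f) z
        + (α * ε * q + β * δ) * Uop q (Yop q f) z
        + (α * ζ * q⁻¹ + γ * δ) * Vop q (Yop q f) z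
        + (β * ζ + γ * ε) * f z := by
  have n0 : z ^ 2 - 1 ≠ 0 := sub_ne_zero.mpr h0
  have n1 : q ^ 2 * z ^ 2 - 1 ≠ 0 := sub_ne_zero.mpr h1
  have n1' : z ^ 2 * q ^ 2 - 1 ≠ 0 := by rw [mul_comm]; exact n1
  have n2 : z ^ 2 - q ^ 2 ≠ 0 := by
    intro h
    apply hm1
    field_simp
    linear_combination h
  have hD : (z ^ 2 - 1) * ((q ^ 2 * z ^ 2 - 1) * (z ^ 2 - q ^ 2)) ≠ 0 :=
    mul_ne_zero n0 (mul_ne_zero n1 n2)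
  set A := f (q ^ 2 * z) with hA
  set C := f (q⁻¹ ^ 2 * z) with hC
  set B := f z with hB
  set D := (z ^ 2 - 1) * ((q ^ 2 * z ^ 2 - 1) * (z ^ 2 - q ^ 2)) with hDdef
  -- inner values of the general operator
  have hMq : Mop q δ ε ζ f (q * z)
      = (δ * (q * z * (A - B)) + ε * (q ^ 2 * z ^ 2 * A - B)
          + ζ * (q ^ 2 * z ^ 2 * B - A)) / (q ^ 2 * z ^ 2 - 1) := by
    simp only [Mop]
    rw [Yop_qz q z f hq hz n1, Uop_qz q z f hq hz n1, Vop_qz q z f hq hz n1]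
    simp only [← hA, ← hB, ← hC]
    rw [mul_div_assoc', mul_div_assoc', mul_div_assoc', ← add_div,
      ← add_div]
  have hMi : Mop q δ ε ζ f (q⁻¹ * z)
      = (δ * (q * z * (B - C)) + ε * (z ^ 2 * B - q ^ 2 * C)
          + ζ * (z ^ 2 * C - q ^ 2 * B)) / (z ^ 2 - q ^ 2) := by
    simp only [Mop]
    rw [Yop_qiz q z f hq hz n2, Uop_qiz q z f hq hz n2, Vop_qiz q z f hq hz n2]
    simp only [← hA, ← hB, ← hC]
    rw [mul_div_assoc', mul_div_assoc', mul_div_assoc', ← add_div,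
      ← add_div]
  -- left-hand side as a single fraction
  have hL : Mop q α β γ (Mop q δ ε ζ f) z
      = (α * (z * ((δ * (q * z * (A - B)) + ε * (q ^ 2 * z ^ 2 * A - B)
            + ζ * (q ^ 2 * z ^ 2 * B - A)) * (z ^ 2 - q ^ 2)
            - (q ^ 2 * z ^ 2 - 1) * (δ * (q * z * (B - C)) + ε * (z ^ 2 * B - q ^ 2 * C)
            + ζ * (z ^ 2 * C - q ^ 2 * B))))
          + β * (z ^ 2 * ((δ * (q * z * (A - B)) + ε * (q ^ 2 * z ^ 2 * A - B)
            + ζ * (q ^ 2 * z ^ 2 * B - A)) * (z ^ 2 - q ^ 2))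
            - (q ^ 2 * z ^ 2 - 1) * (δ * (q * z * (B - C)) + ε * (z ^ 2 * B - q ^ 2 * C)
            + ζ * (z ^ 2 * C - q ^ 2 * B)))
          + γ * (z ^ 2 * ((δ * (q * z * (B - C)) + ε * (z ^ 2 * B - q ^ 2 * C)
            + ζ * (z ^ 2 * C - q ^ 2 * B)) * (q ^ 2 * z ^ 2 - 1))
            - (z ^ 2 - q ^ 2) * (δ * (q * z * (A - B)) + ε * (q ^ 2 * z ^ 2 * A - B)
            + ζ * (q ^ 2 * z ^ 2 * B - A)))) / D := by
    simp only [Mop]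
    rw [Yop_eval q z hz n0, Uop_eval q z hz n0, Vop_eval q z hz n0, hMq, hMi]
    simp only [mul_div_assoc', ← add_div, div_sub_div_same]
    rw [div_eq_div_iff n0 hD, hDdef]
    field_simp
  -- right-hand side terms
  have hUU : Uop q (Uop q f) z
      = (z ^ 2 * (q ^ 2 * z ^ 2 * A - B) * (z ^ 2 - q ^ 2)
          - (q ^ 2 * z ^ 2 - 1) * (z ^ 2 * B - q ^ 2 * C)) / D := by
    rw [Uop_eval q z hz n0, Uop_qz q z f hq hz n1, Uop_qiz q z f hq hz n2,
      ]
    simp only [← hA, ← hB, ← hC]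
    rw [div_eq_div_iff n0 hD, hDdef]
    field_simp
  have hVV : Vop q (Vop q f) z
      = (z ^ 2 * (z ^ 2 * C - q ^ 2 * B) * (q ^ 2 * z ^ 2 - 1)
          - (z ^ 2 - q ^ 2) * (q ^ 2 * z ^ 2 * B - A)) / D := by
    rw [Vop_eval q z hz n0, Vop_qz q z f hq hz n1, Vop_qiz q z f hq hz n2,
      ]
    simp only [← hA, ← hB, ← hC]
    rw [div_eq_div_iff n0 hD, hDdef]
    field_simp
  have hYY : Yop q (Yop q f) z
      = q * (z ^ 2 * ((A - B) * (z ^ 2 - q ^ 2)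
          - (q ^ 2 * z ^ 2 - 1) * (B - C))) / D := by
    rw [Yop_eval q z hz n0, Yop_qz q z f hq hz n1, Yop_qiz q z f hq hz n2,
      ]
    simp only [← hA, ← hB, ← hC]
    rw [div_eq_div_iff n0 hD, hDdef]
    field_simp
  have hUY : Uop q (Yop q f) z
      = q * (z * (z ^ 2 * (A - B) * (z ^ 2 - q ^ 2)
          - (q ^ 2 * z ^ 2 - 1) * (B - C))) / D := by
    rw [Uop_eval q z hz n0, Yop_qz q z f hq hz n1, Yop_qiz q z f hq hz n2,
      ]
    simp only [← hA, ← hB, ← hC]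
    rw [div_eq_div_iff n0 hD, hDdef]
    field_simp
  have hVY : Vop q (Yop q f) z
      = q * (z * (z ^ 2 * (B - C) * (q ^ 2 * z ^ 2 - 1)
          - (z ^ 2 - q ^ 2) * (A - B))) / D := by
    rw [Vop_eval q z hz n0, Yop_qz q z f hq hz n1, Yop_qiz q z f hq hz n2,
      ]
    simp only [← hA, ← hB, ← hC]
    rw [div_eq_div_iff n0 hD, hDdef]
    field_simp
  -- the six right-hand terms over the common denominator, with `q⁻¹` eliminated
  have hT1 : β * ε * Uop q (Uop q f) z
      = β * ε * (z ^ 2 * (q ^ 2 * z ^ 2 * A - B) * (z ^ 2 - q ^ 2)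
          - (q ^ 2 * z ^ 2 - 1) * (z ^ 2 * B - q ^ 2 * C)) / D := by
    rw [hUU, mul_div_assoc']
  have hT2 : γ * ζ * Vop q (Vop q f) z
      = γ * ζ * (z ^ 2 * (z ^ 2 * C - q ^ 2 * B) * (q ^ 2 * z ^ 2 - 1)
          - (z ^ 2 - q ^ 2) * (q ^ 2 * z ^ 2 * B - A)) / D := by
    rw [hVV, mul_div_assoc']
  have hT3 : (α * δ - β * ζ * q⁻¹ - γ * ε * q) * Yop q (Yop q f) z
      = (α * δ * q - β * ζ - γ * ε * q ^ 2) * (z ^ 2 * ((A - B) * (z ^ 2 - q ^ 2)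
          - (q ^ 2 * z ^ 2 - 1) * (B - C))) / D := by
    rw [hYY, mul_div_assoc', div_eq_div_iff hD hD]
    field_simp
  have hT4 : (α * ε * q + β * δ) * Uop q (Yop q f) z
      = (α * ε * q + β * δ) * (q * (z * (z ^ 2 * (A - B) * (z ^ 2 - q ^ 2)
          - (q ^ 2 * z ^ 2 - 1) * (B - C)))) / D := by
    rw [hUY, mul_div_assoc']
  have hT5 : (α * ζ * q⁻¹ + γ * δ) * Vop q (Yop q f) z
      = (α * ζ + γ * δ * q) * (z * (z ^ 2 * (B - C) * (q ^ 2 * z ^ 2 - 1)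
          - (z ^ 2 - q ^ 2) * (A - B))) / D := by
    rw [hVY, mul_div_assoc', div_eq_div_iff hD hD]
    field_simp
  have hT6 : (β * ζ + γ * ε) * f z = (β * ζ + γ * ε) * B * D / D := by
    rw [mul_div_cancel_right₀ _ hD, hB]
  rw [hL, hT1, hT2, hT3, hT4, hT5, hT6]
  rw [← add_div, ← add_div, ← add_div, ← add_div,
    ← add_div]
  congr 1
  rw [hDdef]
  ring
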